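/- A snake graph G = (G_1, ..., G_n) with n ≥ 2 admits a sign function in which every interior (glued) edge has sign '−' if and only if G is a zig-zag snake graph. -/

import Mathlib

namespace SnakeGraph

/-- A vertex of the square lattice. -/
abbrev Vertex : Type := ℤ × ℤ

/-- An edge of the square lattice: a base vertex together with `true` for a
horizontal edge (from `v` to `v + (1,0)`) or `false` for a vertical edge
(from `v` to `v + (0,1)`). -/
abbrev Edge : Type := Vertex × Bool

/-- The two endpoints of an edge. -/
def endpoints (e : Edge) : Finset Vertex :=
  {e.1, if e.2 then (e.1.1 + 1, e.1.2) else (e.1.1, e.1.2 + 1)}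

/-- The gluing direction between two consecutive tiles of a snake graph:
the north or the east edge of a tile is glued to the south, resp. west,
edge of the next tile. -/
inductive Dir : Type
  | east : Dir
  | north : Dir
deriving DecidableEq

def stepDir : Dir → Vertex
  | .east => (1, 0)
  | .north => (0, 1)

/-- The position (south-west corner) of the `i`-th tile (tiles are 0-indexed),
for the snake graph with gluing directions `d 0, d 1, ...`. -/
def tilePos (d : ℕ → Dir) : ℕ → Vertex
  | 0 => (0, 0)
  | i + 1 => tilePos d i + stepDir (d i)

/-- South edge of the tile with south-west corner `p`. -/
def S (p : Vertex) : Edge := (p, true)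

/-- North edge of the tile with south-west corner `p`. -/
def N (p : Vertex) : Edge := ((p.1, p.2 + 1), true)

/-- West edge of the tile with south-west corner `p`. -/
def W (p : Vertex) : Edge := (p, false)

/-- East edge of the tile with south-west corner `p`. -/
def E (p : Vertex) : Edge := ((p.1 + 1, p.2), false)

/-- The four edges of the tile with south-west corner `p`. -/
def tileEdges (p : Vertex) : Finset Edge := {S p, N p, W p, E p}

/-- The four vertices of the tile with south-west corner `p`. -/
def tileVertices (p : Vertex) : Finset Vertex :=
  {p, (p.1 + 1, p.2), (p.1, p.2 + 1), (p.1 + 1, p.2 + 1)}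

/-- The edge set of the sub snake graph consisting of tiles `lo, ..., n-1`. -/
def edgesFrom (d : ℕ → Dir) (lo n : ℕ) : Finset Edge :=
  (Finset.Ico lo n).biUnion fun i => tileEdges (tilePos d i)

/-- The vertex set of the sub snake graph consisting of tiles `lo, ..., n-1`. -/
def verticesFrom (d : ℕ → Dir) (lo n : ℕ) : Finset Vertex :=
  (Finset.Ico lo n).biUnion fun i => tileVertices (tilePos d i)

/-- The edge set of the snake graph with `n` tiles and gluing directions `d`. -/
def edges (d : ℕ → Dir) (n : ℕ) : Finset Edge := edgesFrom d 0 n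

/-- The vertex set of the snake graph with `n` tiles and gluing directions `d`. -/
def vertices (d : ℕ → Dir) (n : ℕ) : Finset Vertex := verticesFrom d 0 n

/-- The interior (glued) edge `e_i` shared by tiles `i` and `i+1`. -/
def glueEdge (d : ℕ → Dir) (i : ℕ) : Edge :=
  match d i with
  | .east => E (tilePos d i)
  | .north => N (tilePos d i)

/-- `M` is a perfect matching of the graph with vertex set `Vs` and edge set
`Es`: a set of edges covering every vertex exactly once. -/
def IsPM (Vs : Finset Vertex) (Es : Finset Edge) (M : Finset Edge) : Prop :=
  M ⊆ Es ∧ ∀ v ∈ Vs, (M.filter fun e => v ∈ endpoints e).card = 1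

/-- `M` is a perfect matching of the snake graph with `n` tiles and gluing
directions `d`. -/
def IsPerfectMatching (d : ℕ → Dir) (n : ℕ) (M : Finset Edge) : Prop :=
  IsPM (vertices d n) (edges d n) M

/-- A sign function on the snake graph with `n` tiles: on every tile,
`sgn N = sgn W`, `sgn S = sgn E`, and `sgn N ≠ sgn S`
(`true` stands for `+`, `false` for `−`). -/
def IsSignFunction (d : ℕ → Dir) (n : ℕ) (f : Edge → Bool) : Prop :=
  ∀ i < n,
    f (N (tilePos d i)) = f (W (tilePos d i)) ∧
    f (S (tilePos d i)) = f (E (tilePos d i)) ∧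
    f (N (tilePos d i)) ≠ f (S (tilePos d i))

/-- A snake graph is zig-zag if no three consecutive tiles are glued in the
same direction. -/
def IsZigZag (d : ℕ → Dir) (n : ℕ) : Prop :=
  ∀ i, i + 2 < n → d i ≠ d (i + 1)

/-- A snake graph is straight if all gluings are in the same direction. -/
def IsStraight (d : ℕ → Dir) (n : ℕ) : Prop :=
  ∀ i j, i + 1 < n → j + 1 < n → d i = d j

end SnakeGraph

namespace SnakeGraphAux

open SnakeGraph

/-- The candidate sign function: the sign of an edge depends only on the
parity of a diagonal coordinate. -/
def signFun (a0 : Bool) : Edge → Bool := fun e =>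
  xor a0 (decide ((e.1.1 + e.1.2 + (if e.2 then 1 else 0)) % 2 = 1))

lemma signFun_N (a0 : Bool) (p : Vertex) :
    signFun a0 (N p) = xor a0 (decide ((p.1 + p.2) % 2 = 1)) := by
  simp only [signFun, N, if_true]
  congr 1
  exact decide_eq_decide.mpr (by omega)

lemma signFun_W (a0 : Bool) (p : Vertex) :
    signFun a0 (W p) = xor a0 (decide ((p.1 + p.2) % 2 = 1)) := by
  simp only [signFun, W, Bool.false_eq_true, if_false]
  congr 1
  exact decide_eq_decide.mpr (by omega)

lemma signFun_S (a0 : Bool) (p : Vertex) :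
    signFun a0 (S p) = xor a0 (decide ((p.1 + p.2 + 1) % 2 = 1)) := by
  simp only [signFun, S, if_true]

lemma signFun_E (a0 : Bool) (p : Vertex) :
    signFun a0 (E p) = xor a0 (decide ((p.1 + p.2 + 1) % 2 = 1)) := by
  simp only [signFun, E, Bool.false_eq_true, if_false]
  congr 1
  exact decide_eq_decide.mpr (by omega)

/-- The other gluing direction. -/
def flip : Dir → Dir
  | .east => .north
  | .north => .east

lemma flip_flip (a : Dir) : flip (flip a) = a := by cases a <;> rfl

lemma eq_flip_of_ne {a b : Dir} (h : a ≠ b) : b = flip a := by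
  cases a <;> cases b <;> simp [flip] at h ⊢

lemma tilePos_sum (d : ℕ → Dir) : ∀ i : ℕ,
    (tilePos d i).1 + (tilePos d i).2 = (i : ℤ)
  | 0 => by simp [tilePos]
  | i + 1 => by
    have ih := tilePos_sum d i
    cases h : d i <;>
      simp [tilePos, stepDir, h, Prod.fst_add, Prod.snd_add] <;> omega

lemma glue_east {d : ℕ → Dir} {i : ℕ} (h : d i = Dir.east) :
    glueEdge d i = SnakeGraph.E (tilePos d i) := by
  rw [glueEdge, h]

lemma glue_north {d : ℕ → Dir} {i : ℕ} (h : d i = Dir.north) :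
    glueEdge d i = SnakeGraph.N (tilePos d i) := by
  rw [glueEdge, h]

lemma east_shared {d : ℕ → Dir} {i : ℕ} (h : d i = Dir.east) :
    SnakeGraph.E (tilePos d i) = SnakeGraph.W (tilePos d (i + 1)) := by
  show SnakeGraph.E (tilePos d i) = SnakeGraph.W (tilePos d i + stepDir (d i))
  rw [h]
  simp [SnakeGraph.E, SnakeGraph.W, stepDir, Prod.ext_iff, Prod.fst_add,
    Prod.snd_add]

lemma north_shared {d : ℕ → Dir} {i : ℕ} (h : d i = Dir.north) :
    SnakeGraph.N (tilePos d i) = SnakeGraph.S (tilePos d (i + 1)) := by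
  show SnakeGraph.N (tilePos d i) = SnakeGraph.S (tilePos d i + stepDir (d i))
  rw [h]
  simp [SnakeGraph.N, SnakeGraph.S, stepDir, Prod.ext_iff, Prod.fst_add,
    Prod.snd_add]

end SnakeGraphAux

open SnakeGraphAux

open SnakeGraph in
/-- A snake graph with at least two tiles admits a sign function in which
every interior (glued) edge has sign `−` iff it is zig-zag. -/
theorem signFunction_allGlueMinus_iff_zigzag (d : ℕ → Dir) (n : ℕ)
    (hn : 2 ≤ n) :
    (∃ f : Edge → Bool, IsSignFunction d n f ∧
        ∀ i, i + 1 < n → f (glueEdge d i) = false) ↔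
      IsZigZag d n := by
  constructor
  · rintro ⟨f, hsf, hglue⟩ i hi hdd
    obtain ⟨hNW, hSE, hNS⟩ := hsf (i + 1) (by omega)
    have hgi := hglue i (by omega)
    have hgi1 := hglue (i + 1) (by omega)
    cases hdi : d i with
    | east =>
      have hd1 : d (i + 1) = Dir.east := by rw [← hdd, hdi]
      rw [glue_east hdi, east_shared hdi] at hgi
      rw [glue_east hd1] at hgi1
      exact hNS (by rw [hNW, hSE, hgi, hgi1])
    | north =>
      have hd1 : d (i + 1) = Dir.north := by rw [← hdd, hdi]
      rw [glue_north hdi, north_shared hdi] at hgi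
      rw [glue_north hd1] at hgi1
      exact hNS (by rw [hgi, hgi1])
  · intro hz
    set a0 : Bool := decide (d 0 = Dir.east) with ha0
    refine ⟨signFun a0, ?_, ?_⟩
    · intro i hi
      have hsum := tilePos_sum d i
      set p := tilePos d i with hp
      refine ⟨?_, ?_, ?_⟩
      · rw [signFun_N, signFun_W]
      · rw [signFun_S, signFun_E]
      · rw [signFun_N, signFun_S]
        have hx : decide ((p.1 + p.2) % 2 = 1) ≠
            decide ((p.1 + p.2 + 1) % 2 = 1) := by
          intro h
          have := decide_eq_decide.mp h
          omega
        intro h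
        apply hx
        cases a0 <;> simpa using h
    · -- key parity fact about the directions of a zig-zag snake graph
      have key : ∀ i, i + 1 < n →
          d i = (if Even i then d 0 else flip (d 0)) := by
        intro i
        induction i with
        | zero => simp
        | succ k ih =>
          intro hk
          have hne := hz k (by omega)
          have ihk := ih (by omega)
          have hdk1 : d (k + 1) = flip (d k) := eq_flip_of_ne hne
          rw [hdk1, ihk]
          by_cases hE : Even k <;>
            simp [Nat.even_add_one, hE, SnakeGraphAux.flip_flip]
      have key' : ∀ i, i + 1 < n → ((d i = Dir.east) ↔ ((d 0 = Dir.east) ↔ Even i)) := by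
        intro i hi
        have hk := key i hi
        by_cases hE : Even i
        · rw [if_pos hE] at hk
          rw [hk]
          simp [hE]
        · rw [if_neg hE] at hk
          rw [hk]
          cases h0 : d 0 <;> simp [SnakeGraphAux.flip, hE]
      intro i hi
      have hsum := tilePos_sum d i
      have hEv : Even i ↔ i % 2 = 0 := Nat.even_iff
      cases hdi : d i with
      | east =>
        have h1 : (d 0 = Dir.east) ↔ Even i := by
          have := (key' i hi).mp hdi
          exact this
        rw [glue_east hdi, signFun_E]
        have h2 : (d 0 = Dir.east) ↔
            (((tilePos d i).1 + (tilePos d i).2 + 1) % 2 = 1) := by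
          rw [h1, hEv]; omega
        rw [ha0, decide_eq_decide.mpr h2, Bool.xor_self]
      | north =>
        have h1 : ¬((d 0 = Dir.east) ↔ Even i) := by
          intro h
          have := (key' i hi).mpr h
          rw [hdi] at this
          exact Dir.noConfusion this
        have h1' : (d 0 = Dir.east) ↔ ¬Even i := by tauto
        rw [glue_north hdi, signFun_N]
        have h2 : (d 0 = Dir.east) ↔
            (((tilePos d i).1 + (tilePos d i).2) % 2 = 1) := by
          rw [h1', hEv]; omega
        rw [ha0, decide_eq_decide.mpr h2, Bool.xor_self]
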